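/- (Charney–Stern condition, recovered from Theorem 1.) If the potential-vorticity gradient does not change sign, i.e. q(y) ≥ 0 for every y ∈ [−L/2, L/2] or q(y) ≤ 0 for every y ∈ [−L/2, L/2], then the flow is stable: for every wavenumber k ≥ 0 there is no unstable mode. -/

import Mathlib

open Set

noncomputable section

/-- An unstable mode for wavenumber `k`: a pair `(c, ψ)` (with derivative data `ψ', ψ''`)
with `Im c ≠ 0`, `ψ` twice continuously differentiable on `[-L/2, L/2]`, not identically
zero, vanishing at the boundary, and satisfying the eigenvalue equation. -/
def IsUnstableMode (L Ld k : ℝ) (U q : ℝ → ℝ) (c : ℂ) (ψ ψ' ψ'' : ℝ → ℂ) : Prop :=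
  c.im ≠ 0 ∧
  (∀ y ∈ Icc (-L/2) (L/2), HasDerivAt ψ (ψ' y) y) ∧
  (∀ y ∈ Icc (-L/2) (L/2), HasDerivAt ψ' (ψ'' y) y) ∧
  ContinuousOn ψ'' (Icc (-L/2) (L/2)) ∧
  (∃ y ∈ Icc (-L/2) (L/2), ψ y ≠ 0) ∧
  ψ (-L/2) = 0 ∧ ψ (L/2) = 0 ∧
  ∀ y ∈ Icc (-L/2) (L/2),
    ψ'' y - ((k^2 + 1/Ld^2 : ℝ) : ℂ) * ψ y + ((q y : ℂ) / ((U y : ℂ) - c)) * ψ y = 0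


open MeasureTheory intervalIntegral

private lemma CS.zero_of_integral_zero {a b : ℝ} (hab : a < b) {f : ℝ → ℝ}
    (hf : ContinuousOn f (Icc a b)) (h0 : ∀ y ∈ Icc a b, 0 ≤ f y)
    (hint : (∫ y in a..b, f y) = 0) : ∀ y ∈ Icc a b, f y = 0 := by
  by_contra hcon
  push_neg at hcon
  obtain ⟨y0, hy0, hfy0⟩ := hcon
  have hpos : 0 < f y0 := (h0 y0 hy0).lt_of_ne (Ne.symm hfy0)
  have hc : ContinuousWithinAt f (Icc a b) y0 := hf y0 hy0
  have hmem : f ⁻¹' (Ioi (f y0 / 2)) ∈ nhdsWithin y0 (Icc a b) :=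
    hc (Ioi_mem_nhds (by linarith))
  obtain ⟨V, hVopen, hy0V, hV⟩ := mem_nhdsWithin.mp hmem
  obtain ⟨δ, hδ, hball⟩ := Metric.isOpen_iff.mp hVopen y0 hy0V
  have hy0a : a ≤ y0 := hy0.1
  have hy0b : y0 ≤ b := hy0.2
  set t := max a (y0 - δ) with ht
  set u := min b (y0 + δ) with hu
  have htu : t < u :=
    max_lt (lt_min hab (by linarith)) (lt_min (by linarith) (by linarith))
  have hta : a ≤ t := le_max_left _ _
  have hub : u ≤ b := min_le_left _ _
  have htb : t ≤ b := htu.le.trans hub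
  have hau : a ≤ u := hta.trans htu.le
  have hsub : ∀ y ∈ Ioo t u, f y0 / 2 < f y := by
    intro y hy
    have hyI : y ∈ Icc a b := ⟨hta.trans hy.1.le, hy.2.le.trans hub⟩
    have hy1 : y0 - δ < y := (le_max_right a (y0 - δ)).trans_lt hy.1
    have hy2 : y < y0 + δ := hy.2.trans_le (min_le_right b (y0 + δ))
    have hyV : y ∈ V := hball (by
      rw [Metric.mem_ball, Real.dist_eq, abs_sub_lt_iff]
      constructor <;> linarith)
    exact hV ⟨hyV, hyI⟩
  have hint' : ∀ s r : ℝ, a ≤ s → s ≤ r → r ≤ b → IntervalIntegrable f volume s r := by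
    intro s r h1 h2 h3
    apply ContinuousOn.intervalIntegrable
    apply hf.mono
    rw [uIcc_of_le h2]
    exact Icc_subset_Icc h1 h3
  have h1 := integral_add_adjacent_intervals (μ := volume)
    (hint' a t le_rfl hta htb) (hint' t u hta htu.le hub)
  have h2 := integral_add_adjacent_intervals (μ := volume)
    (hint' a u le_rfl hau hub) (hint' u b hau hub le_rfl)
  have hmid : 0 < ∫ y in t..u, f y :=
    intervalIntegral_pos_of_pos_on (hint' t u hta htu.le hub)
      (fun x hx => (half_pos hpos).trans (hsub x hx)) htu
  have hn1 : 0 ≤ ∫ y in a..t, f y :=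
    integral_nonneg hta (fun z hz => h0 z (Icc_subset_Icc le_rfl htb hz))
  have hn3 : 0 ≤ ∫ y in u..b, f y :=
    integral_nonneg hub (fun z hz => h0 z (Icc_subset_Icc hau le_rfl hz))
  linarith [h1, h2, hmid, hn1, hn3, hint]


/-- Charney–Stern condition: if the PV gradient `q` does not change sign on the channel,
then the flow is stable. -/
theorem charney_stern
    (L Ld : ℝ) (hL : 0 < L) (hLd : 0 < Ld)
    (U q : ℝ → ℝ)
    (hU : ContDiffOn ℝ 1 U (Icc (-L/2) (L/2)))
    (hq : ContDiffOn ℝ 1 q (Icc (-L/2) (L/2)))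
    (hsign : (∀ y ∈ Icc (-L/2) (L/2), 0 ≤ q y) ∨ (∀ y ∈ Icc (-L/2) (L/2), q y ≤ 0)) :
    ∀ k : ℝ, 0 ≤ k → ∀ (c : ℂ) (ψ ψ' ψ'' : ℝ → ℂ),
      ¬ IsUnstableMode L Ld k U q c ψ ψ' ψ'' := by
  intro k hk c ψ ψ' ψ'' hmode
  obtain ⟨him, hdψ, hdψ', hcψ'', ⟨y0, hy0, hψy0⟩, hba, hbb, heq⟩ := hmode
  have hab : (-L/2 : ℝ) < L/2 := by linarith
  set a : ℝ := -L/2 with ha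
  set b : ℝ := L/2 with hb
  set κ : ℝ := k^2 + 1/Ld^2 with hκdef
  have hκ : 0 < κ := by positivity
  have hcψ : ContinuousOn ψ (Icc a b) := fun y hy => (hdψ y hy).continuousAt.continuousWithinAt
  have hcψ' : ContinuousOn ψ' (Icc a b) := fun y hy => (hdψ' y hy).continuousAt.continuousWithinAt
  have hUc : ∀ y, ((U y : ℂ) - c) ≠ 0 := by
    intro y hy'
    apply him
    have := congrArg Complex.im hy'
    simpa using this
  have hcU : ContinuousOn (fun y => ((U y : ℂ) - c)) (Icc a b) :=
    (Complex.continuous_ofReal.comp_continuousOn hU.continuousOn).sub continuousOn_const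
  have hcq : ContinuousOn (fun y => (q y : ℂ)) (Icc a b) :=
    Complex.continuous_ofReal.comp_continuousOn hq.continuousOn
  have hcdiv : ContinuousOn (fun y => (q y : ℂ) / ((U y : ℂ) - c)) (Icc a b) :=
    hcq.div hcU (fun y _ => hUc y)
  have hIcc : uIcc a b = Icc a b := uIcc_of_le hab.le
  have hii : ∀ f : ℝ → ℂ, ContinuousOn f (Icc a b) → IntervalIntegrable f volume a b := by
    intro f hf
    apply ContinuousOn.intervalIntegrable
    rwa [hIcc]
  -- the three pieces
  set f1 : ℝ → ℂ := fun y => (κ : ℂ) * (ψ y * star (ψ y)) with hf1def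
  set f2 : ℝ → ℂ := fun y => ((q y : ℂ) / ((U y : ℂ) - c)) * (ψ y * star (ψ y)) with hf2def
  set f3 : ℝ → ℂ := fun y => ψ' y * star (ψ' y) with hf3def
  have hcstar : ∀ g : ℝ → ℂ, ContinuousOn g (Icc a b) →
      ContinuousOn (fun y => star (g y)) (Icc a b) :=
    fun g hg => continuous_star.comp_continuousOn hg
  have hc1 : ContinuousOn f1 (Icc a b) :=
    continuousOn_const.mul (hcψ.mul (hcstar _ hcψ))
  have hc2 : ContinuousOn f2 (Icc a b) := hcdiv.mul (hcψ.mul (hcstar _ hcψ))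
  have hc3 : ContinuousOn f3 (Icc a b) := hcψ'.mul (hcstar _ hcψ')
  have hi1 := hii f1 hc1
  have hi2 := hii f2 hc2
  have hi3 := hii f3 hc3
  -- FTC
  have hF : ∀ y ∈ uIcc a b, HasDerivAt (fun y => ψ' y * star (ψ y))
      (ψ'' y * star (ψ y) + ψ' y * star (ψ' y)) y := by
    intro y hy
    rw [hIcc] at hy
    exact (hdψ' y hy).mul ((hdψ y hy).star)
  have hFTC : (∫ y in a..b, (ψ'' y * star (ψ y) + ψ' y * star (ψ' y))) =
      ψ' b * star (ψ b) - ψ' a * star (ψ a) :=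
    integral_eq_sub_of_hasDerivAt hF
      (hii _ ((hcψ''.mul (hcstar _ hcψ)).add hc3))
  have heqn : EqOn (fun y => ψ'' y * star (ψ y) + ψ' y * star (ψ' y))
      (fun y => f1 y - f2 y + f3 y) (uIcc a b) := by
    rw [hIcc]
    intro y hy
    have h := heq y hy
    have hψ'' : ψ'' y = (κ : ℂ) * ψ y - ((q y : ℂ) / ((U y : ℂ) - c)) * ψ y := by
      linear_combination h
    simp only [f1, f2, f3]
    rw [hψ'']
    ring
  have hsum : (∫ y in a..b, f1 y) - (∫ y in a..b, f2 y) + (∫ y in a..b, f3 y) = 0 := by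
    have h0 : (∫ y in a..b, (f1 y - f2 y + f3 y)) = 0 := by
      rw [← integral_congr heqn, hFTC, hba, hbb]
      simp
    rw [← integral_sub hi1 hi2, ← integral_add (hi1.sub hi2) hi3]
    exact h0
  -- real-valued reductions
  set R1 : ℝ := ∫ y in a..b, Complex.normSq (ψ y) with hR1def
  set R3 : ℝ := ∫ y in a..b, Complex.normSq (ψ' y) with hR3def
  have hf1eq : (∫ y in a..b, f1 y) = (κ : ℂ) * (R1 : ℂ) := by
    simp only [f1]
    rw [intervalIntegral.integral_const_mul]
    congr 1
    rw [hR1def, ← intervalIntegral.integral_ofReal]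
    apply integral_congr
    intro y _
    simp [Complex.star_def, Complex.mul_conj]
  have hf3eq : (∫ y in a..b, f3 y) = (R3 : ℂ) := by
    simp only [f3]
    rw [hR3def, ← intervalIntegral.integral_ofReal]
    apply integral_congr
    intro y _
    simp [Complex.star_def, Complex.mul_conj]
  set I2 : ℂ := ∫ y in a..b, f2 y with hI2def
  rw [hf1eq, hf3eq] at hsum
  -- imaginary part
  have himI2 : I2.im = 0 := by
    have h := congrArg Complex.im hsum
    simpa using h
  set g : ℝ → ℝ := fun y => q y * Complex.normSq (ψ y) / Complex.normSq ((U y : ℂ) - c)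
    with hgdef
  have hf2im : ∀ y, (f2 y).im = c.im * g y := by
    intro y
    have hs : ψ y * star (ψ y) = ((Complex.normSq (ψ y) : ℝ) : ℂ) := by
      simp [Complex.star_def, Complex.mul_conj]
    simp only [f2, g, hs]
    rw [Complex.mul_im]
    simp [Complex.div_im, Complex.normSq_pos]
    ring
  have hgim : (∫ y in a..b, (f2 y).im) = I2.im := by
    have h := ContinuousLinearMap.intervalIntegral_comp_comm Complex.imCLM hi2
    simpa using h
  have hgint : (∫ y in a..b, g y) = 0 := by
    have h2 : (∫ y in a..b, (f2 y).im) = c.im * ∫ y in a..b, g y := by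
      simp_rw [hf2im]
      exact integral_const_mul _ _
    have : c.im * (∫ y in a..b, g y) = 0 := by rw [← h2, hgim, himI2]
    exact (mul_eq_zero.mp this).resolve_left him
  have hnsq : ∀ y, (0:ℝ) < Complex.normSq ((U y : ℂ) - c) :=
    fun y => Complex.normSq_pos.mpr (hUc y)
  have hcg : ContinuousOn g (Icc a b) := by
    apply ContinuousOn.div
    · exact hq.continuousOn.mul (Complex.continuous_normSq.comp_continuousOn hcψ)
    · exact Complex.continuous_normSq.comp_continuousOn hcU
    · exact fun y _ => (hnsq y).ne'
  have hg0 : ∀ y ∈ Icc a b, g y = 0 := by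
    rcases hsign with hs | hs
    · exact CS.zero_of_integral_zero hab hcg
        (fun y hy => div_nonneg (mul_nonneg (hs y hy) (Complex.normSq_nonneg _))
          (hnsq y).le) hgint
    · intro y hy
      have hneg := CS.zero_of_integral_zero hab hcg.neg
        (fun z hz => by
          have hgz : g z ≤ 0 := div_nonpos_of_nonpos_of_nonneg
            (mul_nonpos_of_nonpos_of_nonneg (hs z hz) (Complex.normSq_nonneg _))
            (hnsq z).le
          simpa using neg_nonneg.mpr hgz)
        (by simp only [Pi.neg_apply]; rw [intervalIntegral.integral_neg, hgint, neg_zero]) y hy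
      simpa using hneg
  have hf2zero : ∀ y ∈ Icc a b, f2 y = 0 := by
    intro y hy
    have h : q y * Complex.normSq (ψ y) = 0 := by
      have := hg0 y hy
      rw [hgdef] at this
      field_simp [(hnsq y).ne'] at this
      rw [mul_zero] at this
      exact this
    rcases mul_eq_zero.mp h with h' | h'
    · simp [f2, h']
    · have : ψ y = 0 := Complex.normSq_eq_zero.mp h'
      simp [f2, this]
  have hI2zero : I2 = 0 := by
    rw [hI2def]
    have heqz : EqOn f2 (fun _ => (0:ℂ)) (uIcc a b) := by
      rw [hIcc]; exact fun y hy => hf2zero y hy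
    rw [integral_congr heqz]
    simp
  rw [hI2zero] at hsum
  have hreal : κ * R1 + R3 = 0 := by
    have : ((κ * R1 + R3 : ℝ) : ℂ) = 0 := by push_cast; linear_combination hsum
    exact_mod_cast this
  have hR1nn : 0 ≤ R1 :=
    integral_nonneg hab.le (fun y _ => Complex.normSq_nonneg _)
  have hR3nn : 0 ≤ R3 :=
    integral_nonneg hab.le (fun y _ => Complex.normSq_nonneg _)
  have hR1 : R1 = 0 := by nlinarith
  have hψ0 : ∀ y ∈ Icc a b, Complex.normSq (ψ y) = 0 :=
    CS.zero_of_integral_zero hab (Complex.continuous_normSq.comp_continuousOn hcψ)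
      (fun y _ => Complex.normSq_nonneg _) hR1
  exact hψy0 (Complex.normSq_eq_zero.mp (hψ0 y0 hy0))
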